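/- For the 4×4 real symmetric matrix Ĉ_{α,β} built from qubit observables A_0 = σ_z, A_1 = c_A σ_z + s_A σ_x, B_0 = σ_z, B_1 = c_B σ_z + s_B σ_x (with c_A² + s_A² = 1, c_B² + s_B² = 1) via Ĉ_{α,β} = A_0⊗B_0 + A_0⊗B_1 + A_1⊗B_0 − A_1⊗B_1 + α A_0⊗1 + β 1⊗B_0, the characteristic polynomial equals q(λ) = λ⁴ − 2λ²(α²+β²+4) + 8αβλ(c_A(c_B−1) − c_B − 1) + 8β² c_A(c_B²−1) − 8c_B(α² + (β²−2)c_B) + (α²−β²)² + 8c_A²(c_B−1)(α² − 2c_B − 2). -/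

import Mathlib

open Matrix Kronecker

noncomputable def σz : Matrix (Fin 2) (Fin 2) ℝ := !![1, 0; 0, -1]
noncomputable def σx : Matrix (Fin 2) (Fin 2) ℝ := !![0, 1; 1, 0]

/-- The doubly-tilted CHSH Bell operator built from qubit observables
`A₀ = σz`, `A₁ = c_A σz + s_A σx`, `B₀ = σz`, `B₁ = c_B σz + s_B σx`. -/
noncomputable def bellOp (α β cA sA cB sB : ℝ) :
    Matrix (Fin 2 × Fin 2) (Fin 2 × Fin 2) ℝ :=
  let A0 := σz
  let A1 := cA • σz + sA • σx
  let B0 := σz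
  let B1 := cB • σz + sB • σx
  A0 ⊗ₖ B0 + A0 ⊗ₖ B1 + A1 ⊗ₖ B0 - A1 ⊗ₖ B1
    + α • (A0 ⊗ₖ (1 : Matrix (Fin 2) (Fin 2) ℝ))
    + β • ((1 : Matrix (Fin 2) (Fin 2) ℝ) ⊗ₖ B0)


set_option maxHeartbeats 1600000 in
lemma det_four_aux (M : Matrix (Fin 4) (Fin 4) ℝ) : M.det =
    M 0 0 * (M 1 1 * (M 2 2 * M 3 3 - M 2 3 * M 3 2) - M 1 2 * (M 2 1 * M 3 3 - M 2 3 * M 3 1)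
      + M 1 3 * (M 2 1 * M 3 2 - M 2 2 * M 3 1))
    - M 0 1 * (M 1 0 * (M 2 2 * M 3 3 - M 2 3 * M 3 2) - M 1 2 * (M 2 0 * M 3 3 - M 2 3 * M 3 0)
      + M 1 3 * (M 2 0 * M 3 2 - M 2 2 * M 3 0))
    + M 0 2 * (M 1 0 * (M 2 1 * M 3 3 - M 2 3 * M 3 1) - M 1 1 * (M 2 0 * M 3 3 - M 2 3 * M 3 0)
      + M 1 3 * (M 2 0 * M 3 1 - M 2 1 * M 3 0))
    - M 0 3 * (M 1 0 * (M 2 1 * M 3 2 - M 2 2 * M 3 1) - M 1 1 * (M 2 0 * M 3 2 - M 2 2 * M 3 0)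
      + M 1 2 * (M 2 0 * M 3 1 - M 2 1 * M 3 0)) := by
  simp [Matrix.det_succ_row_zero, Fin.sum_univ_succ,
    show (Fin.succ 2 : Fin 4) = 3 from rfl,
    show Fin.succAbove (2 : Fin 4) 2 = 3 from rfl,
    show Fin.succAbove (1 : Fin 4) 2 = 3 from rfl,
    show Fin.succAbove (0 : Fin 4) 2 = 3 from rfl,
    show Fin.succAbove (3 : Fin 4) 2 = 2 from rfl,
    show (Fin.castSucc 2 : Fin 4) = 2 from rfl]
  ring

set_option maxHeartbeats 1600000 in
/-- the characteristic polynomial `det(λ I₄ − Ĉ_{α,β})` of the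
doubly-tilted CHSH Bell operator equals
`λ⁴ − 2λ²(α²+β²+4) + 8αβλ(c_A(c_B−1) − c_B − 1) + 8β² c_A(c_B²−1)`
`− 8c_B(α² + (β²−2)c_B) + (α²−β²)² + 8c_A²(c_B−1)(α² − 2c_B − 2)`. -/
theorem bellOp_charpoly (α β cA sA cB sB : ℝ)
    (hA : cA ^ 2 + sA ^ 2 = 1) (hB : cB ^ 2 + sB ^ 2 = 1) (t : ℝ) :
    (t • (1 : Matrix (Fin 2 × Fin 2) (Fin 2 × Fin 2) ℝ)
        - bellOp α β cA sA cB sB).det =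
      t ^ 4 - 2 * t ^ 2 * (α ^ 2 + β ^ 2 + 4)
        + 8 * α * β * t * (cA * (cB - 1) - cB - 1)
        + 8 * β ^ 2 * cA * (cB ^ 2 - 1)
        - 8 * cB * (α ^ 2 + (β ^ 2 - 2) * cB)
        + (α ^ 2 - β ^ 2) ^ 2
        + 8 * cA ^ 2 * (cB - 1) * (α ^ 2 - 2 * cB - 2) := by
  rw [← Matrix.det_submatrix_equiv_self (finProdFinEquiv (m := 2) (n := 2)).symm]
  have key : (t • (1 : Matrix (Fin 2 × Fin 2) (Fin 2 × Fin 2) ℝ)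
        - bellOp α β cA sA cB sB).submatrix finProdFinEquiv.symm finProdFinEquiv.symm =
      !![t-(1+cB+cA-cA*cB+α+β), -(sB-cA*sB), -(sA-sA*cB), sA*sB;
         -(sB-cA*sB), t-(-1-cB-cA+cA*cB+α-β), sA*sB, -(-sA+sA*cB);
         -(sA-sA*cB), sA*sB, t-(-1-cB-cA+cA*cB-α+β), -(-sB+cA*sB);
         sA*sB, -(-sA+sA*cB), -(-sB+cA*sB), t-(1+cB+cA-cA*cB-α-β)] := by
    ext i j
    fin_cases i <;> fin_cases j <;>
      (simp [bellOp, σz, σx, finProdFinEquiv, Fin.divNat, Fin.modNat, Matrix.one_apply, Prod.ext_iff, Fin.ext_iff,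
        show ((3 : Fin 4) : ℕ) = 3 from rfl, show ((2 : Fin 4) : ℕ) = 2 from rfl]; try ring)
  rw [key, det_four_aux]
  simp only [Matrix.cons_val', Matrix.cons_val_zero, Matrix.cons_val_one, Matrix.head_cons,
    Matrix.empty_val', Matrix.cons_val_fin_one, Matrix.head_fin_const, Matrix.of_apply,
    Matrix.cons_val_succ, Matrix.cons_val]
  norm_num
  linear_combination (3 + -10*sB^2 + 3*sB^4 + -4*cB + -4*cB*sB^2 + 2*cB^2 + 6*cB^2*sB^2 + -4*cB^3 + 3*cB^4 + sA^2 + 2*sA^2*sB^2 + sA^2*sB^4 + -4*sA^2*cB + -4*sA^2*cB*sB^2 + 6*sA^2*cB^2 + 2*sA^2*cB^2*sB^2 + -4*sA^2*cB^3 + sA^2*cB^4 + 4*cA + -4*cA*sB^4 + -8*cA*cB + 8*cA*cB*sB^2 + -8*cA*cB^2*sB^2 + 8*cA*cB^3 + -4*cA*cB^4 + cA^2 + 2*cA^2*sB^2 + cA^2*sB^4 + -4*cA^2*cB + -4*cA^2*cB*sB^2 + 6*cA^2*cB^2 + 2*cA^2*cB^2*sB^2 + -4*cA^2*cB^3 +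 cA^2*cB^4 + -2*β^2 + 2*β^2*sB^2 + 4*β^2*cB + -2*β^2*cB^2 + 2*α^2 + 2*α^2*sB^2 + -4*α^2*cB + 2*α^2*cB^2 + -2*t^2 + -2*t^2*sB^2 + 4*t^2*cB + -2*t^2*cB^2) * hA + (-4 + 4*sB^2 + 4*cB^2 + -8*cA + -8*cA*sB^2 + -8*cA*cB^2 + 12*cA^2 + 4*cA^2*sB^2 + 4*cA^2*cB^2 + 4*β^2 + -4*β^2*cA + 4*α^2*cA + -4*α^2*cA^2 + -4*t^2 + 4*t^2*cA) * hB
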